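/- A graph G is proper independent 2-thin if and only if G is bipartite and admits a bipartition (V^1,V^2) with linear orders on V^1 and V^2 such that the bipartite patterns R_1 and R_2 do not occur. -/
import Mathlib


/-- An ordering (given by an injective labeling `f`) is consistent with a partition
(given by a class function `c`). -/
def ConsistentWith {V : Type*} {K : Type*} (G : SimpleGraph V) (f : V → ℕ) (c : V → K) : Prop :=
  ∀ u v w : V, f u < f v → f v < f w → c u = c v → G.Adj w u → G.Adj w v

/-- The reverse of the ordering given by `f` is consistent with `c`. -/
def RevConsistentWith {V : Type*} {K : Type*} (G : SimpleGraph V) (f : V → ℕ) (c : V → K) : Prop :=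
  ∀ u v w : V, f u < f v → f v < f w → c v = c w → G.Adj u w → G.Adj u v

/-- `G` is proper independent 2-thin: it admits a vertex ordering and a partition into
two independent classes such that both the ordering and its reverse are consistent
with the partition. -/
def ProperIndepTwoThin {V : Type*} (G : SimpleGraph V) : Prop :=
  ∃ f : V → ℕ, Function.Injective f ∧ ∃ c : V → Fin 2,
    ConsistentWith G f c ∧ RevConsistentWith G f c ∧
    ∀ u v : V, c u = c v → ¬ G.Adj u v

/-- The bipartite pattern `R₁` occurs (for part orders given by `f`): `a₁ < a₂` in one
part and `b₁ < b₂` in the other with `a₁b₂, a₂b₁` edges and `a₁b₁` a non-edge. -/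
def OccursR1 {V : Type*} (G : SimpleGraph V) (c : V → Fin 2) (f : V → ℕ) : Prop :=
  ∃ a1 a2 b1 b2 : V, c a1 = c a2 ∧ c b1 = c b2 ∧ c a1 ≠ c b1 ∧
    f a1 < f a2 ∧ f b1 < f b2 ∧ G.Adj a1 b2 ∧ G.Adj a2 b1 ∧ ¬ G.Adj a1 b1

/-- The bipartite pattern `R₂` occurs: `a₁ < a₂` in one part and `b₁ < b₂` in the other
with `a₁b₂, a₂b₁` edges and `a₂b₂` a non-edge. -/
def OccursR2 {V : Type*} (G : SimpleGraph V) (c : V → Fin 2) (f : V → ℕ) : Prop :=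
  ∃ a1 a2 b1 b2 : V, c a1 = c a2 ∧ c b1 = c b2 ∧ c a1 ≠ c b1 ∧
    f a1 < f a2 ∧ f b1 < f b2 ∧ G.Adj a1 b2 ∧ G.Adj a2 b1 ∧ ¬ G.Adj a2 b2

set_option linter.unusedSectionVars false

section MyAux

lemma myFin2_eq_of_ne : ∀ a b d : Fin 2, a ≠ d → b ≠ d → a = b := by decide

lemma myFin2_cases : ∀ a : Fin 2, a = 0 ∨ a = 1 := by decide

variable {V : Type*} [Fintype V] {G : SimpleGraph V} {c : V → Fin 2} {f : V → ℕ}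

lemma myForcedR1 (hR : ¬ OccursR1 G c f) {a1 a2 b1 b2 : V}
    (h1 : c a1 = c a2) (h2 : c b1 = c b2) (h3 : c a1 ≠ c b1)
    (h4 : f a1 < f a2) (h5 : f b1 < f b2) (e1 : G.Adj a1 b2) (e2 : G.Adj a2 b1) :
    G.Adj a1 b1 := by
  by_contra hn
  exact hR ⟨a1, a2, b1, b2, h1, h2, h3, h4, h5, e1, e2, hn⟩

lemma myForcedR2 (hR : ¬ OccursR2 G c f) {a1 a2 b1 b2 : V}
    (h1 : c a1 = c a2) (h2 : c b1 = c b2) (h3 : c a1 ≠ c b1)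
    (h4 : f a1 < f a2) (h5 : f b1 < f b2) (e1 : G.Adj a1 b2) (e2 : G.Adj a2 b1) :
    G.Adj a2 b2 := by
  by_contra hn
  exact hR ⟨a1, a2, b1, b2, h1, h2, h3, h4, h5, e1, e2, hn⟩

/-- Minimum `f`-value over the neighbourhood of `v` (0 if isolated). -/
noncomputable def myInf (G : SimpleGraph V) (f : V → ℕ) (v : V) : ℕ :=
  sInf (f '' {u | G.Adj v u})

open Classical in
/-- Maximum `f`-value over the neighbourhood of `v` (0 if isolated). -/
noncomputable def mySup (G : SimpleGraph V) (f : V → ℕ) (v : V) : ℕ :=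
  (Finset.univ.filter (fun u => G.Adj v u)).sup f

lemma myInf_le {v b : V} (h : G.Adj v b) : myInf G f v ≤ f b :=
  Nat.sInf_le ⟨b, h, rfl⟩

lemma myInf_mem {v b0 : V} (h : G.Adj v b0) :
    ∃ b, G.Adj v b ∧ f b = myInf G f v := by
  have hne : (f '' {u | G.Adj v u}).Nonempty := ⟨f b0, b0, h, rfl⟩
  obtain ⟨b, hb, hfb⟩ := Nat.sInf_mem hne
  exact ⟨b, hb, hfb⟩

lemma le_mySup {v b : V} (h : G.Adj v b) : f b ≤ mySup G f v := by
  classical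
  unfold mySup
  exact Finset.le_sup (by simp [h])

lemma mySup_mem {v b0 : V} (h : G.Adj v b0) :
    ∃ b, G.Adj v b ∧ f b = mySup G f v := by
  classical
  unfold mySup
  have hne : (Finset.univ.filter (fun u => G.Adj v u)).Nonempty := ⟨b0, by simp [h]⟩
  obtain ⟨b, hb, hfb⟩ := Finset.exists_mem_eq_sup _ hne f
  refine ⟨b, ?_, hfb.symm⟩
  simpa using hb

lemma myInf_mono (hc : ∀ u v : V, G.Adj u v → c u ≠ c v) (hR1 : ¬ OccursR1 G c f)
    {a a' x y : V} (hca : c a = c a') (hlt : f a < f a')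
    (ha : G.Adj a x) (ha' : G.Adj a' y) : myInf G f a ≤ myInf G f a' := by
  by_contra hcon
  push_neg at hcon
  obtain ⟨b', hb', hfb'⟩ := myInf_mem (f := f) ha'
  obtain ⟨b, hb, hfb⟩ := myInf_mem (f := f) ha
  have hbb : f b' < f b := by omega
  have hab' : c a ≠ c b' := by rw [hca]; exact hc a' b' hb'
  have hcb : c b' = c b :=
    myFin2_eq_of_ne _ _ (c a) (Ne.symm hab') (fun h => hc a b hb h.symm)
  have forced : G.Adj a b' := myForcedR1 hR1 hca hcb hab' hlt hbb hb hb'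
  have := myInf_le (f := f) forced
  omega

lemma mySup_mono (hc : ∀ u v : V, G.Adj u v → c u ≠ c v) (hR2 : ¬ OccursR2 G c f)
    {a a' x y : V} (hca : c a = c a') (hlt : f a < f a')
    (ha : G.Adj a x) (ha' : G.Adj a' y) : mySup G f a ≤ mySup G f a' := by
  by_contra hcon
  push_neg at hcon
  obtain ⟨b', hb', hfb'⟩ := mySup_mem (f := f) ha'
  obtain ⟨b, hb, hfb⟩ := mySup_mem (f := f) ha
  have hbb : f b' < f b := by omega
  have hab' : c a ≠ c b' := by rw [hca]; exact hc a' b' hb'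
  have hcb : c b' = c b :=
    myFin2_eq_of_ne _ _ (c a) (Ne.symm hab') (fun h => hc a b hb h.symm)
  have forced : G.Adj a' b := myForcedR2 hR2 hca hcb hab' hlt hbb hb hb'
  have := le_mySup (f := f) forced
  omega

/-- Consecutiveness: any non-isolated vertex `w` of the other part whose `f`-value lies
between `myInf y` and `mySup y` is adjacent to `y`. -/
lemma myInterval (hf : Function.Injective f) (hc : ∀ u v : V, G.Adj u v → c u ≠ c v)
    (hR1 : ¬ OccursR1 G c f) (hR2 : ¬ OccursR2 G c f)
    {y w z x : V} (hcyw : c y ≠ c w) (hw : G.Adj w z) (hy : G.Adj y x)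
    (h1 : myInf G f y ≤ f w) (h2 : f w ≤ mySup G f y) : G.Adj y w := by
  obtain ⟨b1, hb1, hfb1⟩ := myInf_mem (f := f) hy
  obtain ⟨b3, hb3, hfb3⟩ := mySup_mem (f := f) hy
  rcases eq_or_lt_of_le h1 with heq | h1'
  · have : b1 = w := hf (by omega)
    exact this ▸ hb1
  rcases eq_or_lt_of_le h2 with heq | h2'
  · have : b3 = w := hf (by omega)
    exact this ▸ hb3
  by_contra hn
  have hczy : c z = c y :=
    myFin2_eq_of_ne (c z) (c y) (c w) (fun h => hc w z hw h.symm) hcyw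
  have hcb1 : c b1 = c w :=
    myFin2_eq_of_ne (c b1) (c w) (c y) (fun h => hc y b1 hb1 h.symm) (Ne.symm hcyw)
  have hcb3 : c b3 = c w :=
    myFin2_eq_of_ne (c b3) (c w) (c y) (fun h => hc y b3 hb3 h.symm) (Ne.symm hcyw)
  rcases lt_trichotomy (f z) (f y) with h | h | h
  · -- pattern (z, y ; b1, w) : R₂ forces `Adj y w`
    have hne : c z ≠ c b1 := by rw [hczy, hcb1]; exact hcyw
    exact hn (myForcedR2 hR2 hczy hcb1 hne h (by omega) hw.symm hb1)
  · have : z = y := hf h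
    subst this
    exact hn hw.symm
  · -- pattern (y, z ; w, b3) : R₁ forces `Adj y w`
    exact hn (myForcedR1 hR1 hczy.symm hcb3.symm hcyw h (by omega) hb3 hw.symm)

lemma myFin2_ne01 : ∀ a b : Fin 2, a ≠ b → a = 0 → b = 1 := by decide

lemma myFin2_ne10 : ∀ a b : Fin 2, a ≠ b → a = 1 → b = 0 := by decide

open Classical in
/-- The merged ordering key. Isolated vertices come first; a vertex of class 0 is placed
just before its first neighbour; a vertex of class 1 keeps its own position. -/
noncomputable def myKey (G : SimpleGraph V) (c : V → Fin 2) (f : V → ℕ) (v : V) :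
    ℕ ×ₗ ℕ ×ₗ ℕ :=
  if ∃ u, G.Adj v u then
    if c v = 0 then toLex (myInf G f v + 1, toLex (0, f v))
    else toLex (f v + 1, toLex (1, 0))
  else toLex (0, toLex (0, f v))

lemma myLex3_lt {x1 x2 x3 y1 y2 y3 : ℕ} :
    (toLex (x1, toLex (x2, x3)) : ℕ ×ₗ ℕ ×ₗ ℕ) < toLex (y1, toLex (y2, y3)) ↔
      x1 < y1 ∨ x1 = y1 ∧ (x2 < y2 ∨ x2 = y2 ∧ x3 < y3) := by
  simp [Prod.Lex.lt_iff]

lemma myKey_zero {v : V} (h : ∃ u, G.Adj v u) (h0 : c v = 0) :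
    myKey G c f v = toLex (myInf G f v + 1, toLex (0, f v)) := by
  simp [myKey, h, h0]

lemma myKey_one {v : V} (h : ∃ u, G.Adj v u) (h0 : c v = 1) :
    myKey G c f v = toLex (f v + 1, toLex (1, 0)) := by
  simp [myKey, h, h0]

lemma myKey_iso {v : V} (h : ¬ ∃ u, G.Adj v u) :
    myKey G c f v = toLex (0, toLex (0, f v)) := by
  simp [myKey, h]

lemma myKey_inj (hf : Function.Injective f) : Function.Injective (myKey G c f) := by
  intro u v h
  apply hf
  rcases myFin2_cases (c u) with hcu | hcu <;> rcases myFin2_cases (c v) with hcv | hcv <;>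
    by_cases hu : ∃ w, G.Adj u w <;> by_cases hv : ∃ w, G.Adj v w <;>
      simp [myKey, hu, hv, hcu, hcv, Prod.ext_iff] at h ⊢ <;> omega

open Classical in
noncomputable def myRank (G : SimpleGraph V) (c : V → Fin 2) (f : V → ℕ) (v : V) : ℕ :=
  (Finset.univ.filter (fun u => myKey G c f u < myKey G c f v)).card

lemma myRank_lt_of {u v : V} (h : myKey G c f u < myKey G c f v) :
    myRank G c f u < myRank G c f v := by
  classical
  unfold myRank
  refine Finset.card_lt_card ⟨fun x hx => ?_, fun hall => ?_⟩
  · simp only [Finset.mem_filter, Finset.mem_univ, true_and] at hx ⊢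
    exact lt_trans hx h
  · have hu : u ∈ Finset.univ.filter (fun x => myKey G c f x < myKey G c f v) := by
      simp only [Finset.mem_filter, Finset.mem_univ, true_and]
      exact h
    have := hall hu
    simp only [Finset.mem_filter, Finset.mem_univ, true_and] at this
    exact lt_irrefl _ this

lemma myKey_lt_of_rank (hf : Function.Injective f) {u v : V}
    (h : myRank G c f u < myRank G c f v) : myKey G c f u < myKey G c f v := by
  rcases lt_trichotomy (myKey G c f u) (myKey G c f v) with hh | hh | hh
  · exact hh
  · rw [myKey_inj hf hh] at h
    exact absurd h (lt_irrefl _)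
  · exact absurd (lt_trans h (myRank_lt_of hh)) (lt_irrefl _)

lemma myRank_inj (hf : Function.Injective f) : Function.Injective (myRank G c f) := by
  intro u v h
  rcases lt_trichotomy (myKey G c f u) (myKey G c f v) with hh | hh | hh
  · exact absurd h (Nat.ne_of_lt (myRank_lt_of hh))
  · exact myKey_inj hf hh
  · exact absurd h.symm (Nat.ne_of_lt (myRank_lt_of hh))

end MyAux

/-- A graph `G` is proper independent 2-thin if and only if `G` is bipartite and
admits a bipartition `(V¹, V²)` with linear orders on `V¹` and `V²` such that the
bipartite patterns `R₁` and `R₂` do not occur. -/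
theorem properIndepTwoThin_iff_bipartite_avoids_R1_R2 {V : Type*} [Fintype V]
    (G : SimpleGraph V) :
    ProperIndepTwoThin G ↔ ∃ c : V → Fin 2, (∀ u v : V, G.Adj u v → c u ≠ c v) ∧
      ∃ f : V → ℕ, Function.Injective f ∧ ¬ OccursR1 G c f ∧ ¬ OccursR2 G c f := by
  constructor
  · -- forward direction
    rintro ⟨f, hf, c, hC, hR, hI⟩
    refine ⟨c, fun u v h hcc => hI u v hcc h, f, hf, ?_, ?_⟩
    · rintro ⟨a1, a2, b1, b2, h1, h2, h3, h4, h5, e1, e2, hn⟩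
      have hne : a1 ≠ b1 := fun h => h3 (congrArg c h)
      rcases lt_trichotomy (f a1) (f b1) with h | h | h
      · exact hn (hR a1 b1 b2 h h5 h2 e1)
      · exact hne (hf h)
      · exact hn (hR b1 a1 a2 h h4 h1 e2.symm).symm
    · rintro ⟨a1, a2, b1, b2, h1, h2, h3, h4, h5, e1, e2, hn⟩
      have hne : a2 ≠ b2 := fun h => h3 (h1.trans ((congrArg c h).trans h2.symm))
      rcases lt_trichotomy (f a2) (f b2) with h | h | h
      · exact hn (hC a1 a2 b2 h4 h h1 e1.symm).symm
      · exact hne (hf h)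
      · exact hn (hC b1 b2 a2 h5 h h2 e2)
  · -- backward direction
    rintro ⟨c, hc, f, hf, hR1, hR2⟩
    classical
    refine ⟨myRank G c f, myRank_inj hf, c, ?_, ?_, fun u v hcc hadj => hc u v hadj hcc⟩
    · -- ConsistentWith
      intro u v w h1 h2 hcc hadj
      have k1 : myKey G c f u < myKey G c f v := myKey_lt_of_rank hf h1
      have k2 : myKey G c f v < myKey G c f w := myKey_lt_of_rank hf h2
      have hwu : c w ≠ c u := hc w u hadj
      have hu_ex : ∃ z, G.Adj u z := ⟨w, hadj.symm⟩
      have hw_ex : ∃ z, G.Adj w z := ⟨u, hadj⟩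
      rcases myFin2_cases (c u) with hcu | hcu
      · -- c u = c v = 0, c w = 1
        have hcv : c v = 0 := by rw [← hcc]; exact hcu
        have hcw : c w = 1 := by
          rcases myFin2_cases (c w) with h | h
          · exact absurd (h.trans hcu.symm) hwu
          · exact h
        by_cases hv_ex : ∃ z, G.Adj v z
        · obtain ⟨zv, hzv⟩ := hv_ex
          rw [myKey_zero hu_ex hcu, myKey_zero ⟨zv, hzv⟩ hcv, myLex3_lt] at k1
          rw [myKey_zero ⟨zv, hzv⟩ hcv, myKey_one hw_ex hcw, myLex3_lt] at k2
          -- f u < f v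
          have hfuv : f u < f v := by
            rcases lt_trichotomy (f u) (f v) with h | h | h
            · exact h
            · exact absurd (hf h ▸ k1) (by omega)
            · have := myInf_mono hc hR1 (hcv.trans hcu.symm) h hzv hadj.symm
              omega
          have hinf : myInf G f v ≤ f w := by omega
          have hsup1 : f w ≤ mySup G f u := le_mySup hadj.symm
          have hsup2 : mySup G f u ≤ mySup G f v :=
            mySup_mono hc hR2 (hcu.trans hcv.symm) hfuv hadj.symm hzv
          have hcvw : c v ≠ c w := by rw [hcv, hcw]; decide
          exact (myInterval hf hc hR1 hR2 hcvw hadj hzv hinf (by omega)).symm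
        · rw [myKey_zero hu_ex hcu, myKey_iso hv_ex, myLex3_lt] at k1
          omega
      · -- c u = 1: vacuous
        have hcw : c w = 0 := myFin2_ne10 _ _ (fun h => hwu h.symm) hcu
        have k3 := lt_trans k1 k2
        rw [myKey_one hu_ex hcu, myKey_zero hw_ex hcw, myLex3_lt] at k3
        have := myInf_le (f := f) hadj
        omega
    · -- RevConsistentWith
      intro u v w h1 h2 hcvw hadj
      have k1 : myKey G c f u < myKey G c f v := myKey_lt_of_rank hf h1
      have k2 : myKey G c f v < myKey G c f w := myKey_lt_of_rank hf h2
      have huw : c u ≠ c w := hc u w hadj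
      have hu_ex : ∃ z, G.Adj u z := ⟨w, hadj⟩
      have hw_ex : ∃ z, G.Adj w z := ⟨u, hadj.symm⟩
      rcases myFin2_cases (c u) with hcu | hcu
      · -- c u = 0, c v = c w = 1
        have hcw : c w = 1 := myFin2_ne01 _ _ huw hcu
        have hcv : c v = 1 := by rw [hcvw]; exact hcw
        by_cases hv_ex : ∃ z, G.Adj v z
        · obtain ⟨zv, hzv⟩ := hv_ex
          rw [myKey_zero hu_ex hcu, myKey_one ⟨zv, hzv⟩ hcv, myLex3_lt] at k1
          rw [myKey_one ⟨zv, hzv⟩ hcv, myKey_one hw_ex hcw, myLex3_lt] at k2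
          have hinf : myInf G f u ≤ f v := by omega
          have hsup : f v ≤ mySup G f u := by
            have := le_mySup (f := f) hadj
            omega
          have hcuv : c u ≠ c v := by rw [hcu, hcv]; decide
          exact myInterval hf hc hR1 hR2 hcuv hzv hadj hinf hsup
        · rw [myKey_zero hu_ex hcu, myKey_iso hv_ex, myLex3_lt] at k1
          omega
      · -- c u = 1: vacuous
        have hcw : c w = 0 := myFin2_ne10 _ _ huw hcu
        have k3 := lt_trans k1 k2
        rw [myKey_one hu_ex hcu, myKey_zero hw_ex hcw, myLex3_lt] at k3
        have := myInf_le (f := f) hadj.symm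
        omega
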